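/- The beta invariant β(M) = (−1)^{r(M)} Σ_{X⊆E} (−1)^{|X|} r(X) of a matroid M with at least 2 elements equals the coefficient b_{10} of x in the Tutte polynomial T_M(x,y) = Σ_{A⊆E} (x−1)^{r(E)−r(A)} (y−1)^{|A|−r(A)}. -/

import Mathlib

open Finset MvPolynomial
open scoped Classical

lemma term_eq (k m c : ℕ) (i : Fin 2) :
    ((-1 : MvPolynomial (Fin 2) ℤ)) ^ k * X i ^ m * (c : MvPolynomial (Fin 2) ℤ)
      = C ((-1 : ℤ) ^ k * c) * X i ^ m := by
  rw [map_mul, map_pow, map_neg, map_one, C_eq_coe_nat]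
  ring

lemma coeff0_pow (i : Fin 2) (a : ℕ) :
    MvPolynomial.coeff (0 : Fin 2 →₀ ℕ) ((X i - 1 : MvPolynomial (Fin 2) ℤ)^a) = (-1)^a := by
  rw [← constantCoeff_eq]
  simp

lemma coeff1_pow (a : ℕ) :
    MvPolynomial.coeff (Finsupp.single 0 1) ((X 0 - 1 : MvPolynomial (Fin 2) ℤ)^a) = (-1)^(a+1) * a := by
  rw [sub_pow, MvPolynomial.coeff_sum]
  simp only [one_pow, mul_one, term_eq, coeff_C_mul, coeff_X_pow]
  rw [Finset.sum_eq_single 1]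
  · by_cases h : a = 0
    · subst h; simp
    · rw [if_pos rfl, Nat.choose_one_right]; ring
  · intro m hm hne
    have : ¬ (Finsupp.single (0:Fin 2) m = Finsupp.single (0:Fin 2) 1) := by
      intro h
      exact hne (by simpa using DFunLike.congr_fun h 0)
    simp [this]
  · intro h
    simp only [Finset.mem_range] at h
    have : a = 0 := by omega
    subst this; simp

lemma coeff1_pow' (b : ℕ) :
    MvPolynomial.coeff (Finsupp.single 0 1) ((X 1 - 1 : MvPolynomial (Fin 2) ℤ)^b) = 0 := by
  rw [sub_pow, MvPolynomial.coeff_sum]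
  apply Finset.sum_eq_zero
  intro m hm
  simp only [one_pow, mul_one, term_eq, coeff_C_mul, coeff_X_pow]
  have : ¬ (Finsupp.single (1:Fin 2) m = Finsupp.single (0:Fin 2) 1) := by
    intro h
    have := DFunLike.congr_fun h (0 : Fin 2)
    simp [Finsupp.single_apply] at this
  simp [this]

lemma coeff_key (a b : ℕ) :
    MvPolynomial.coeff (Finsupp.single 0 1)
      ((X 0 - 1)^a * (X 1 - 1)^b : MvPolynomial (Fin 2) ℤ) = (-1)^(a+b+1) * a := by
  rw [MvPolynomial.coeff_mul, Finsupp.antidiagonal_single, Finset.sum_map,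
    Finset.Nat.sum_antidiagonal_eq_sum_range_succ_mk]
  rw [Finset.sum_range_succ, Finset.sum_range_one]
  simp only [Function.Embedding.coe_prodMap, Function.Embedding.coeFn_mk, Prod.map_apply,
    Nat.sub_self, Nat.sub_zero, Finsupp.single_zero]
  rw [coeff0_pow, coeff1_pow, coeff1_pow', coeff0_pow]
  ring

/-- The Tutte polynomial `T_M(x,y) = ∑_{A⊆E} (x−1)^{r(E)−r(A)} (y−1)^{|A|−r(A)}`
as a polynomial in two variables `X 0 = x`, `X 1 = y`. -/
noncomputable def tutte {α : Type*} [DecidableEq α] (E : Finset α)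
    (r : Finset α → ℕ) : MvPolynomial (Fin 2) ℤ :=
  ∑ A ∈ E.powerset, (X 0 - 1) ^ (r E - r A) * (X 1 - 1) ^ (A.card - r A)

/-- The beta invariant `β(M) = (−1)^{r(E)} ∑_{X⊆E} (−1)^{|X|} r(X)`. -/
def betaInv {α : Type*} [DecidableEq α] (E : Finset α) (r : Finset α → ℕ) : ℤ :=
  (-1) ^ (r E) * ∑ X ∈ E.powerset, (-1) ^ X.card * (r X : ℤ)

/-- For a matroid with at least 2 elements, the beta invariant equals the
coefficient `b_{10}` of `x` in the Tutte polynomial. -/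
theorem betaInv_eq_tutte_coeff {α : Type*} [DecidableEq α]
    (E : Finset α) (r : Finset α → ℕ)
    (hcard : ∀ A, r A ≤ A.card)
    (hmono : ∀ A B, A ⊆ B → r A ≤ r B)
    (hsub : ∀ A B, r (A ∪ B) + r (A ∩ B) ≤ r A + r B)
    (hE : ∀ A, r (A ∩ E) = r A)
    (hcard2 : 2 ≤ E.card) :
    betaInv E r = MvPolynomial.coeff (Finsupp.single 0 1) (tutte E r) := by
  rw [tutte, MvPolynomial.coeff_sum]
  have hterm : ∀ A ∈ E.powerset,
      MvPolynomial.coeff (Finsupp.single 0 1)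
        ((X 0 - 1) ^ (r E - r A) * (X 1 - 1) ^ (A.card - r A) : MvPolynomial (Fin 2) ℤ)
      = (-1) ^ (r E) * ((-1) ^ A.card * ((r A : ℤ) - r E)) := by
    intro A hA
    have h1 : r A ≤ r E := hmono A E (Finset.mem_powerset.mp hA)
    have h2 : r A ≤ A.card := hcard A
    rw [coeff_key]
    have hcast : ((r E - r A : ℕ) : ℤ) = (r E : ℤ) - r A := by
      exact Nat.cast_sub h1
    have hexp : (r E - r A) + (A.card - r A) + 1 + 2 * r A = r E + A.card + 1 := by omega
    have hpow : ((-1 : ℤ)) ^ ((r E - r A) + (A.card - r A) + 1)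
        = (-1) ^ (r E + A.card + 1) := by
      rw [← hexp]
      conv_rhs => rw [pow_add]
      simp [pow_mul]
    rw [hpow, hcast]
    ring
  rw [Finset.sum_congr rfl hterm, ← Finset.mul_sum]
  have hne : E.Nonempty := Finset.card_pos.mp (by omega)
  have hsplit : ∑ A ∈ E.powerset, (-1 : ℤ) ^ A.card * ((r A : ℤ) - r E)
      = (∑ A ∈ E.powerset, (-1 : ℤ) ^ A.card * (r A : ℤ))
        - (r E : ℤ) * ∑ A ∈ E.powerset, (-1 : ℤ) ^ A.card := by
    rw [Finset.mul_sum, ← Finset.sum_sub_distrib]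
    apply Finset.sum_congr rfl
    intro A _
    ring
  rw [hsplit, Finset.sum_powerset_neg_one_pow_card_of_nonempty hne, mul_zero, sub_zero, betaInv]
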